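/- arXiv:2111.07761 — 2 statements merged into one kernel-verified Lean document; each statement's English description precedes it below -/
import Mathlib

section
/- The ground cost function c_llb (which assigns cost 0 to matching equal labels or two dummies, c_vl to matching distinct labels, and c_v to matching a label with a dummy) is a tree (pseudo)metric if and only if c_vl ≤ 2·c_v. -/
open scoped Classical

/-- The weighted path distance between two nodes of a tree. -/
noncomputable def treeDist {V : Type*} (T : SimpleGraph V) (hT : T.IsTree) (w : Sym2 V → ℝ)
    (u v : V) : ℝ :=
  (((hT.existsUnique_path u v).exists.choose).edges.map w).sum

/-- `c` is a tree (pseudo)metric on `X`: it is realized by weighted path distances in some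
(finite) tree with non-negative edge weights, with the elements of `X` mapped to tree
nodes. -/
def IsTreePseudometricOn {X : Type} (c : X → X → ℝ) : Prop :=
  ∃ (V : Type) (_ : Fintype V) (T : SimpleGraph V) (hT : T.IsTree)
    (w : Sym2 V → ℝ) (ρ : X → V),
    (∀ e, 0 ≤ w e) ∧ ∀ x y, c x y = treeDist T hT w (ρ x) (ρ y)

/-- The ground cost function `c_llb` on `L ∪ {ε}` (here `Option L`, with `none` the dummy
`ε`): `0` for two equal labels or two dummies, `cvl` for two distinct labels, and `cv` when
exactly one argument is the dummy. -/
noncomputable def cllbOpt {L : Type} (cv cvl : ℝ) : Option L → Option L → ℝ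
  | some a, some b => if a = b then 0 else cvl
  | some _, none => cv
  | none, some _ => cv
  | none, none => 0

/- ### Auxiliary lemmas -/

/-- `treeDist` equals the weight-sum of any path between the endpoints. -/
private lemma treeDist_eq_of_isPath {V : Type*} (T : SimpleGraph V) (hT : T.IsTree)
    (w : Sym2 V → ℝ) {u v : V} (p : T.Walk u v) (hp : p.IsPath) :
    treeDist T hT w u v = (p.edges.map w).sum := by
  obtain ⟨p0, hp0, hun⟩ := hT.existsUnique_path u v
  have h1 : (hT.existsUnique_path u v).exists.choose = p0 :=
    hun _ (hT.existsUnique_path u v).exists.choose_spec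
  rw [treeDist, h1, hun p hp]

/-- `treeDist` is at most the weight-sum of any walk between the endpoints. -/
private lemma treeDist_le_walk {V : Type*} (T : SimpleGraph V) (hT : T.IsTree)
    (w : Sym2 V → ℝ) (hw : ∀ e, 0 ≤ w e) {u v : V} (q : T.Walk u v) :
    treeDist T hT w u v ≤ (q.edges.map w).sum := by
  rw [treeDist_eq_of_isPath T hT w q.bypass q.bypass_isPath]
  have hnd : q.bypass.edges.Nodup := q.bypass_isPath.isTrail.edges_nodup
  obtain ⟨l, hl1, hl2⟩ := List.subperm_of_subset hnd q.edges_bypass_subset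
  calc (q.bypass.edges.map w).sum = (l.map w).sum := ((hl1.map w).sum_eq).symm
    _ ≤ (q.edges.map w).sum := by
        refine List.Sublist.sum_le_sum (hl2.map w) ?_
        intro a ha
        simp only [List.mem_map] at ha
        obtain ⟨e, _, rfl⟩ := ha
        exact hw e

private lemma treeDist_triangle {V : Type*} (T : SimpleGraph V) (hT : T.IsTree)
    (w : Sym2 V → ℝ) (hw : ∀ e, 0 ≤ w e) (u x v : V) :
    treeDist T hT w u v ≤ treeDist T hT w u x + treeDist T hT w x v := by
  have h := treeDist_le_walk T hT w hw
    (((hT.existsUnique_path u x).exists.choose).append ((hT.existsUnique_path x v).exists.choose))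
  rwa [SimpleGraph.Walk.edges_append, List.map_append, List.sum_append] at h

/- ### The star tree -/

/-- The star graph on `Option K` with center `none`. -/
private def starGraph (K : Type) : SimpleGraph (Option K) where
  Adj u v := u ≠ v ∧ (u = none ∨ v = none)
  symm := ⟨by rintro u v ⟨h1, h2⟩; exact ⟨h1.symm, h2.symm⟩⟩
  loopless := ⟨by rintro u ⟨h1, _⟩; exact h1 rfl⟩

private lemma star_two_step {K : Type} {a b v : Option K}
    (h : (starGraph K).Adj none a) (h' : (starGraph K).Adj a b)
    (r : (starGraph K).Walk b v)
    (hp : (SimpleGraph.Walk.cons h (SimpleGraph.Walk.cons h' r)).IsPath) : False := by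
  rw [SimpleGraph.Walk.cons_isPath_iff] at hp
  have hb : b = none := by
    rcases h'.2 with h1 | h1
    · exact absurd h1.symm h.1
    · exact h1
  apply hp.2
  rw [SimpleGraph.Walk.support_cons]
  exact List.mem_cons_of_mem _ (hb ▸ r.start_mem_support)

private lemma star_from_none {K : Type} {a v : Option K}
    (h : (starGraph K).Adj none a) (p : (starGraph K).Walk a v)
    (hp : (SimpleGraph.Walk.cons h p).IsPath) : a = v := by
  cases p with
  | nil => rfl
  | cons h' r => exact (star_two_step h h' r hp).elim

/-- The canonical path between two vertices in the star graph. -/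
private noncomputable def starWalk {K : Type} (u v : Option K) : (starGraph K).Walk u v :=
  if h : u = v then h ▸ SimpleGraph.Walk.nil
  else if hu : u = none then SimpleGraph.Walk.cons ⟨h, Or.inl hu⟩ SimpleGraph.Walk.nil
  else if hv : v = none then SimpleGraph.Walk.cons ⟨h, Or.inr hv⟩ SimpleGraph.Walk.nil
  else SimpleGraph.Walk.cons (⟨hu, Or.inr rfl⟩ : (starGraph K).Adj u none)
    (SimpleGraph.Walk.cons (⟨fun e => hv e.symm, Or.inl rfl⟩ : (starGraph K).Adj none v)
      SimpleGraph.Walk.nil)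

private lemma starWalk_isPath {K : Type} (u v : Option K) : (starWalk u v).IsPath := by
  rw [starWalk]
  split_ifs with h h1 h2
  · subst h; exact SimpleGraph.Walk.IsPath.nil
  · refine (SimpleGraph.Walk.cons_isPath_iff _ _).mpr ?_
    simpa using h
  · refine (SimpleGraph.Walk.cons_isPath_iff _ _).mpr ?_
    simpa using h
  · refine (SimpleGraph.Walk.cons_isPath_iff _ _).mpr
      (And.imp_left (SimpleGraph.Walk.cons_isPath_iff _ _).mpr ?_)
    constructor
    · constructor
      · exact SimpleGraph.Walk.IsPath.nil
      · simpa using fun e => h2 e.symm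
    · show u ∉ [none, v]
      intro hmem
      rcases List.mem_cons.mp hmem with e | e
      · exact h1 e
      · exact h (List.mem_singleton.mp e)

private lemma star_canon_two {K : Type} {u v : Option K}
    (h : (starGraph K).Adj u none) (h2 : (starGraph K).Adj none v)
    (hp : (SimpleGraph.Walk.cons h (SimpleGraph.Walk.cons h2 SimpleGraph.Walk.nil)).IsPath) :
    SimpleGraph.Walk.cons h (SimpleGraph.Walk.cons h2 SimpleGraph.Walk.nil) = starWalk u v := by
  have hu : u ≠ none := h.1
  have hv : v ≠ none := fun e => h2.1 e.symm
  have huv : u ≠ v := by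
    rw [SimpleGraph.Walk.cons_isPath_iff] at hp
    intro e
    exact hp.2 (by
      rw [SimpleGraph.Walk.support_cons]
      exact List.mem_cons_of_mem _ (e ▸ SimpleGraph.Walk.start_mem_support _))
  rw [starWalk, dif_neg huv, dif_neg hu, dif_neg hv]

private lemma star_path_eq_starWalk {K : Type} {u v : Option K}
    (p : (starGraph K).Walk u v) (hp : p.IsPath) : p = starWalk u v := by
  cases p with
  | nil =>
    rw [starWalk, dif_pos rfl]
  | @cons _ a v h p' =>
    have hp' : p'.IsPath := hp.of_cons
    by_cases hu : u = none
    · subst hu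
      have hav : a = v := star_from_none h p' hp
      subst hav
      have hnil : p' = SimpleGraph.Walk.nil := SimpleGraph.Walk.isPath_iff_eq_nil.mp hp'
      subst hnil
      rw [starWalk, dif_neg h.1, dif_pos rfl]
    · have ha : a = none := by
        rcases h.2 with h1 | h1
        · exact absurd h1 hu
        · exact h1
      subst ha
      cases p' with
      | nil =>
        rw [starWalk, dif_neg h.1, dif_neg hu, dif_pos rfl]
      | @cons _ b v h2 p'' =>
        have hbv : b = v := star_from_none h2 p'' hp'
        subst hbv
        have hnil : p'' = SimpleGraph.Walk.nil := SimpleGraph.Walk.isPath_iff_eq_nil.mp hp'.of_cons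
        subst hnil
        exact star_canon_two h h2 hp

private lemma starGraph_isTree (K : Type) : (starGraph K).IsTree := by
  rw [SimpleGraph.isTree_iff_existsUnique_path]
  exact ⟨⟨none⟩, fun u v =>
    ⟨starWalk u v, starWalk_isPath u v, fun p hp => star_path_eq_starWalk p hp⟩⟩

/-- The ground cost function `c_llb` is a tree (pseudo)metric if and only if
`cvl ≤ 2·cv` (for a label set with at least two distinct labels and non-negative costs). -/
theorem cllb_tree_metric_iff {L : Type} [Fintype L] (hL : ∃ a b : L, a ≠ b)
    (cv cvl : ℝ) (hcv : 0 ≤ cv) (hcvl : 0 ≤ cvl) :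
    IsTreePseudometricOn (cllbOpt (L := L) cv cvl) ↔ cvl ≤ 2 * cv := by
  constructor
  · rintro ⟨V, _, T, hT, w, ρ, hw, hc⟩
    obtain ⟨a, b, hab⟩ := hL
    have h1 : cvl = treeDist T hT w (ρ (some a)) (ρ (some b)) := by
      have := hc (some a) (some b)
      rwa [show cllbOpt cv cvl (some a) (some b) = cvl from if_neg hab] at this
    have h2 : cv = treeDist T hT w (ρ (some a)) (ρ none) := hc (some a) none
    have h3 : cv = treeDist T hT w (ρ none) (ρ (some b)) := hc none (some b)
    have htri := treeDist_triangle T hT w hw (ρ (some a)) (ρ none) (ρ (some b))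
    rw [← h1, ← h2, ← h3] at htri
    linarith
  · intro hle
    refine ⟨Option (Option L), inferInstance, starGraph (Option L),
      starGraph_isTree (Option L),
      fun e => if (some (none : Option L)) ∈ e then cv - cvl / 2 else cvl / 2,
      fun x => some x, ?_, ?_⟩
    · intro e
      dsimp only
      split_ifs <;> linarith
    · intro x y
      set w : Sym2 (Option (Option L)) → ℝ :=
        fun e => if (some (none : Option L)) ∈ e then cv - cvl / 2 else cvl / 2 with hwdef
      match x, y with
      | some a, some b =>
        by_cases hab : a = b
        · subst hab
          rw [treeDist_eq_of_isPath _ _ w SimpleGraph.Walk.nil SimpleGraph.Walk.IsPath.nil]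
          simp [cllbOpt]
        · have hA1 : (starGraph (Option L)).Adj (some (some a)) none := ⟨by simp, Or.inr rfl⟩
          have hA2 : (starGraph (Option L)).Adj none (some (some b)) := ⟨by simp, Or.inl rfl⟩
          have hpath : (SimpleGraph.Walk.cons hA1
              (SimpleGraph.Walk.cons hA2 SimpleGraph.Walk.nil)).IsPath := by
            simp [SimpleGraph.Walk.cons_isPath_iff, hab]
          rw [treeDist_eq_of_isPath _ _ w _ hpath]
          simp only [SimpleGraph.Walk.edges_cons, SimpleGraph.Walk.edges_nil,
            List.map_cons, List.map_nil, List.sum_cons, List.sum_nil]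
          rw [hwdef]
          simp only [Sym2.mem_iff]
          rw [if_neg (by simp), if_neg (by simp)]
          simp [cllbOpt, hab]
      | some a, none =>
        have hA1 : (starGraph (Option L)).Adj (some (some a)) none := ⟨by simp, Or.inr rfl⟩
        have hA2 : (starGraph (Option L)).Adj none (some (none : Option L)) :=
          ⟨by simp, Or.inl rfl⟩
        have hpath : (SimpleGraph.Walk.cons hA1
            (SimpleGraph.Walk.cons hA2 SimpleGraph.Walk.nil)).IsPath := by
          simp [SimpleGraph.Walk.cons_isPath_iff]
        rw [treeDist_eq_of_isPath _ _ w _ hpath]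
        simp only [SimpleGraph.Walk.edges_cons, SimpleGraph.Walk.edges_nil,
          List.map_cons, List.map_nil, List.sum_cons, List.sum_nil]
        rw [hwdef]
        simp only [Sym2.mem_iff]
        rw [if_neg (by simp), if_pos (by simp)]
        simp [cllbOpt]
      | none, some b =>
        have hA1 : (starGraph (Option L)).Adj (some (none : Option L)) none :=
          ⟨by simp, Or.inr rfl⟩
        have hA2 : (starGraph (Option L)).Adj none (some (some b)) := ⟨by simp, Or.inl rfl⟩
        have hpath : (SimpleGraph.Walk.cons hA1
            (SimpleGraph.Walk.cons hA2 SimpleGraph.Walk.nil)).IsPath := by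
          simp [SimpleGraph.Walk.cons_isPath_iff]
        rw [treeDist_eq_of_isPath _ _ w _ hpath]
        simp only [SimpleGraph.Walk.edges_cons, SimpleGraph.Walk.edges_nil,
          List.map_cons, List.map_nil, List.sum_cons, List.sum_nil]
        rw [hwdef]
        simp only [Sym2.mem_iff]
        rw [if_pos (by simp), if_neg (by simp)]
        simp [cllbOpt]
      | none, none =>
        rw [treeDist_eq_of_isPath _ _ w SimpleGraph.Walk.nil SimpleGraph.Walk.IsPath.nil]
        simp [cllbOpt]
end

section
/- For any two graphs G and H, the degree lower bound DLB(G,H) — defined as the minimal cost of a bijection between the dummy-padded vertex sets of G and H with ground cost c_dlb(u,v) = (c_e/2)·|δ(u) − δ(v)| (dummies having degree 0) — is at most the graph edit distance GED(G,H). -/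
open scoped Classical

/-- A labeled graph: finite vertex set (of natural-number names), finite loop-free edge set,
vertex and edge labeling functions. -/
structure LGraph (Lv Le : Type) where
  verts : Finset ℕ
  edges : Finset (Sym2 ℕ)
  vl : ℕ → Lv
  el : Sym2 ℕ → Le

namespace LGraph

variable {Lv Le : Type}

/-- Well-formedness: edges are loop-free and their endpoints are vertices. -/
def WF (G : LGraph Lv Le) : Prop :=
  (∀ e ∈ G.edges, ¬ e.IsDiag) ∧ ∀ e ∈ G.edges, ∀ v ∈ e, v ∈ G.verts

/-- The degree of a vertex: the number of incident edges. -/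
noncomputable def degree (G : LGraph Lv Le) (v : ℕ) : ℕ :=
  (G.edges.filter fun e => v ∈ e).card

/-- Edit operations: insert/delete/relabel a vertex, insert/delete/relabel an edge. -/
inductive Op (Lv Le : Type) where
  | addV (v : ℕ) (l : Lv)
  | delV (v : ℕ)
  | relV (v : ℕ) (l : Lv)
  | addE (u v : ℕ) (l : Le)
  | delE (e : Sym2 ℕ)
  | relE (e : Sym2 ℕ) (l : Le)

/-- Applying an edit operation to a graph; `none` if the operation is invalid
(e.g. deleting a non-isolated vertex). -/
noncomputable def apply (o : Op Lv Le) (G : LGraph Lv Le) : Option (LGraph Lv Le) :=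
  match o with
  | .addV v l => if v ∈ G.verts then none else
      some ⟨insert v G.verts, G.edges, Function.update G.vl v l, G.el⟩
  | .delV v => if v ∈ G.verts ∧ ∀ e ∈ G.edges, v ∉ e then
      some ⟨G.verts.erase v, G.edges, G.vl, G.el⟩ else none
  | .relV v l => if v ∈ G.verts then
      some ⟨G.verts, G.edges, Function.update G.vl v l, G.el⟩ else none
  | .addE u v l => if u ∈ G.verts ∧ v ∈ G.verts ∧ u ≠ v ∧ s(u, v) ∉ G.edges then
      some ⟨G.verts, insert s(u, v) G.edges, G.vl, Function.update G.el s(u, v) l⟩ else none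
  | .delE e => if e ∈ G.edges then
      some ⟨G.verts, G.edges.erase e, G.vl, G.el⟩ else none
  | .relE e l => if e ∈ G.edges then
      some ⟨G.verts, G.edges, G.vl, Function.update G.el e l⟩ else none

/-- Applying a sequence of edit operations (an edit path). -/
noncomputable def applyList : List (Op Lv Le) → LGraph Lv Le → Option (LGraph Lv Le)
  | [], G => some G
  | o :: os, G => (apply o G).bind (applyList os)

/-- Cost of a single edit operation, with vertex insertion/deletion cost `cv`, vertex
relabeling cost `cvl`, edge insertion/deletion cost `ce` and edge relabeling cost `cel`. -/
def opCost (cv cvl ce cel : ℝ) : Op Lv Le → ℝ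
  | .addV _ _ => cv
  | .delV _ => cv
  | .relV _ _ => cvl
  | .addE _ _ _ => ce
  | .delE _ => ce
  | .relE _ _ => cel

/-- Graph isomorphism: a bijection of the vertex sets preserving labels, adjacency and
edge labels. -/
def Iso (G H : LGraph Lv Le) : Prop :=
  ∃ f : ℕ → ℕ, Set.BijOn f ↑G.verts ↑H.verts ∧
    (∀ v ∈ G.verts, H.vl (f v) = G.vl v) ∧
    (∀ u ∈ G.verts, ∀ v ∈ G.verts, (s(u, v) ∈ G.edges ↔ s(f u, f v) ∈ H.edges)) ∧
    (∀ u ∈ G.verts, ∀ v ∈ G.verts, s(u, v) ∈ G.edges → H.el s(f u, f v) = G.el s(u, v))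

/-- The graph edit distance: the infimum of the total cost over all edit paths
transforming `G` into a graph isomorphic to `H`. -/
noncomputable def GED (cv cvl ce cel : ℝ) (G H : LGraph Lv Le) : ℝ :=
  sInf {r | ∃ (ops : List (Op Lv Le)) (H' : LGraph Lv Le),
    applyList ops G = some H' ∧ Iso H' H ∧ r = (ops.map (opCost cv cvl ce cel)).sum}

/-- The vertex set of `G` padded with one dummy vertex (`Sum.inr`) for every vertex
of `H`, so that the padded vertex sets of `G` and `H` have equal cardinality. -/
abbrev PadV (G H : LGraph Lv Le) : Type := {x // x ∈ G.verts} ⊕ {x // x ∈ H.verts}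

/-- Ground cost `c_llb`: 0 for equal labels or two dummies, `cvl` for distinct labels,
`cv` for matching a vertex with a dummy. -/
noncomputable def cllb (cv cvl : ℝ) (G H : LGraph Lv Le) : PadV G H → PadV H G → ℝ
  | .inl u, .inl v => if G.vl u.1 = H.vl v.1 then 0 else cvl
  | .inl _, .inr _ => cv
  | .inr _, .inl _ => cv
  | .inr _, .inr _ => 0

/-- Degree of a padded vertex; dummies have degree 0. -/
noncomputable def padDeg (G H : LGraph Lv Le) : PadV G H → ℕ
  | .inl u => G.degree u.1
  | .inr _ => 0

/-- Ground cost `c_dlb(u,v) = (ce/2)·|δ(u) − δ(v)|`. -/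
noncomputable def cdlb (ce : ℝ) (G H : LGraph Lv Le) (x : PadV G H) (y : PadV H G) : ℝ :=
  ce / 2 * |(padDeg G H x : ℝ) - (padDeg H G y : ℝ)|

/-- Optimal assignment cost between the padded vertex sets of `G` and `H` under a ground
cost `c`: the minimum over all bijections `f` of `∑ x, c x (f x)`. -/
noncomputable def oaCost (G H : LGraph Lv Le) (c : PadV G H → PadV H G → ℝ) : ℝ :=
  sInf {r | ∃ f : PadV G H ≃ PadV H G, r = ∑ x, c x (f x)}

/-- The label lower bound. -/
noncomputable def LLB (cv cvl : ℝ) (G H : LGraph Lv Le) : ℝ :=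
  oaCost G H (cllb cv cvl G H)

/-- The degree lower bound. -/
noncomputable def DLB (ce : ℝ) (G H : LGraph Lv Le) : ℝ :=
  oaCost G H (cdlb ce G H)

/-- The combined lower bound `CLB = LLB + DLB`. -/
noncomputable def CLB (cv cvl ce : ℝ) (G H : LGraph Lv Le) : ℝ :=
  LLB cv cvl G H + DLB ce G H

end LGraph


namespace LGraph
variable {Lv Le : Type}

section Basics

lemma dlb_set_eq (ce : ℝ) (G H : LGraph Lv Le) :
    {r | ∃ f : PadV G H ≃ PadV H G, r = ∑ x, cdlb ce G H x (f x)} =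
      Set.range (fun f : PadV G H ≃ PadV H G => ∑ x, cdlb ce G H x (f x)) := by
  ext r; simp [Set.range, eq_comm]

lemma dlb_le (ce : ℝ) (G H : LGraph Lv Le) (f : PadV G H ≃ PadV H G) :
    DLB ce G H ≤ ∑ x, cdlb ce G H x (f x) := by
  unfold DLB oaCost
  rw [dlb_set_eq]
  exact csInf_le (Set.finite_range _).bddBelow ⟨f, rfl⟩

lemma dlb_attained (ce : ℝ) (G H : LGraph Lv Le) :
    ∃ f : PadV G H ≃ PadV H G, DLB ce G H = ∑ x, cdlb ce G H x (f x) := by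
  have h : sInf (Set.range (fun f : PadV G H ≃ PadV H G => ∑ x, cdlb ce G H x (f x))) ∈
      Set.range (fun f : PadV G H ≃ PadV H G => ∑ x, cdlb ce G H x (f x)) :=
    Set.Nonempty.csInf_mem ⟨_, ⟨Equiv.sumComm _ _, rfl⟩⟩ (Set.finite_range _)
  obtain ⟨f, hf⟩ := h
  exact ⟨f, by unfold DLB oaCost; rw [dlb_set_eq]; exact hf.symm⟩

/-- Key surgery lemma: from a bijection of option types, remove `none` without
increasing the degree-matching cost. -/
lemma key {A B : Type} [Fintype A] [Fintype B] (c : ℝ) (hc : 0 ≤ c) (dA : A → ℕ) (dB : B → ℕ)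
    (e : Option A ≃ Option B) :
    ∃ e' : A ≃ B, ∑ a, c * |(dA a : ℝ) - (dB (e' a) : ℝ)| ≤
      ∑ x : Option A, c * |((x.elim 0 dA : ℕ) : ℝ) - (((e x).elim 0 dB : ℕ) : ℝ)| := by
  refine ⟨e.removeNone, ?_⟩
  rw [Fintype.sum_option]
  rcases h : e none with _ | b₀
  · have hs : ∀ a, e (some a) = some (e.removeNone a) := by
      intro a
      rcases ha : e (some a) with _ | b
      · exact absurd (e.injective (ha.trans h.symm)) (by simp)
      · rw [← ha]; exact (Equiv.removeNone_some e ⟨b, ha⟩).symm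
    have : ∀ a, c * |(dA a : ℝ) - (dB (e.removeNone a) : ℝ)|
        = c * |(((some a).elim 0 dA : ℕ) : ℝ) - (((e (some a)).elim 0 dB : ℕ) : ℝ)| := by
      intro a; rw [hs a]; rfl
    rw [Finset.sum_congr rfl (fun a _ => this a)]
    simp
  · have hsymm : e.symm none ≠ none := by
      intro hn
      rw [Equiv.option_symm_apply_none_iff] at hn
      rw [h] at hn; exact Option.some_ne_none _ hn
    obtain ⟨a₀, ha₀⟩ := Option.ne_none_iff_exists'.mp hsymm
    have hea₀ : e (some a₀) = none := by
      rw [← ha₀]; simp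
    have hr₀ : e.removeNone a₀ = b₀ := by
      have := Equiv.removeNone_none e hea₀
      rw [h] at this; exact Option.some_injective _ this
    have hs : ∀ a, a ≠ a₀ → e (some a) = some (e.removeNone a) := by
      intro a ha
      rcases hae : e (some a) with _ | b
      · exact absurd (Option.some_injective _ (e.injective (hae.trans hea₀.symm))) ha
      · rw [← hae]; exact (Equiv.removeNone_some e ⟨b, hae⟩).symm
    rw [← Finset.add_sum_erase _ _ (Finset.mem_univ a₀),
        ← Finset.add_sum_erase _ (fun a => c * |(((some a).elim 0 dA : ℕ) : ℝ) - (((e (some a)).elim 0 dB : ℕ) : ℝ)|) (Finset.mem_univ a₀)]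
    have hsum : (∑ a ∈ Finset.univ.erase a₀, c * |(dA a : ℝ) - (dB (e.removeNone a) : ℝ)|)
        = ∑ a ∈ Finset.univ.erase a₀, c * |(((some a).elim 0 dA : ℕ) : ℝ) - (((e (some a)).elim 0 dB : ℕ) : ℝ)| := by
      refine Finset.sum_congr rfl fun a ha => ?_
      rw [hs a (Finset.ne_of_mem_erase ha)]; rfl
    rw [hsum]
    simp only [h, hea₀, hr₀, Option.elim]
    have habs : c * |(dA a₀ : ℝ) - (dB b₀ : ℝ)| ≤ c * |(dB b₀ : ℝ)| + c * |(dA a₀ : ℝ)| := by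
      have : |(dA a₀ : ℝ) - (dB b₀ : ℝ)| ≤ |(dA a₀ : ℝ)| + |(dB b₀ : ℝ)| := abs_sub _ _
      nlinarith
    have h1 : c * |(0 : ℝ) - (dB b₀ : ℝ)| = c * |(dB b₀ : ℝ)| := by rw [zero_sub, abs_neg]
    have h2 : c * |(dA a₀ : ℝ) - (0 : ℝ)| = c * |(dA a₀ : ℝ)| := by rw [sub_zero]
    push_cast
    linarith

end Basics

section Step

/-- `Option A ⊕ B ≃ Option (A ⊕ B)`. -/
def optSumL {A B : Type} : Option A ⊕ B ≃ Option (A ⊕ B) where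
  toFun x := match x with
    | .inl none => none
    | .inl (some a) => some (.inl a)
    | .inr b => some (.inr b)
  invFun x := match x with
    | none => .inl none
    | some (.inl a) => .inl (some a)
    | some (.inr b) => .inr b
  left_inv := by rintro ((_ | a) | b) <;> rfl
  right_inv := by rintro (_ | (a | b)) <;> rfl

/-- `A ⊕ Option B ≃ Option (A ⊕ B)`. -/
def optSumR {A B : Type} : A ⊕ Option B ≃ Option (A ⊕ B) where
  toFun x := match x with
    | .inl a => some (.inl a)
    | .inr none => none
    | .inr (some b) => some (.inr b)
  invFun x := match x with
    | none => .inr none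
    | some (.inl a) => .inl a
    | some (.inr b) => .inr (some b)
  left_inv := by rintro (a | (_ | b)) <;> rfl
  right_inv := by rintro (_ | (a | b)) <;> rfl

lemma degree_eq_zero (G : LGraph Lv Le) (v : ℕ) (h : ∀ e ∈ G.edges, v ∉ e) :
    G.degree v = 0 := by
  unfold degree
  rw [Finset.card_eq_zero, Finset.filter_eq_empty_iff]
  exact h

/-- Triangle-type arithmetic helper. -/
lemma tri_helper (c : ℝ) (hc : 0 ≤ c) (p q r : ℕ) :
    c * |(p : ℝ) - r| ≤ c * |(q : ℝ) - r| + c * |(p : ℝ) - q| := by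
  have := abs_sub_le ((p : ℝ)) ((q : ℝ)) ((r : ℝ))
  nlinarith

/-- Step lemma for edge modifications: if the two graphs share vertex sets and degrees
differ by at most 1 at two specified vertices, DLB changes by at most `ce`. -/
lemma dlb_le_edge (ce : ℝ) (hce : 0 ≤ ce) (G H : LGraph Lv Le) (E' : Finset (Sym2 ℕ))
    (vl' : ℕ → Lv) (el' : Sym2 ℕ → Le) (a b : ℕ)
    (hdeg : ∀ w, w ≠ a → w ≠ b →
      (LGraph.mk G.verts E' vl' el' : LGraph Lv Le).degree w = G.degree w)
    (hda : |(G.degree a : ℝ) - ((LGraph.mk G.verts E' vl' el' : LGraph Lv Le).degree a : ℝ)| ≤ 1)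
    (hdb : |(G.degree b : ℝ) - ((LGraph.mk G.verts E' vl' el' : LGraph Lv Le).degree b : ℝ)| ≤ 1) :
    DLB ce G H ≤ ce + DLB ce (LGraph.mk G.verts E' vl' el') H := by
  obtain ⟨f₁, hf₁⟩ := dlb_attained ce (LGraph.mk G.verts E' vl' el' : LGraph Lv Le) H
  have hHdeg : ∀ y : PadV H G, padDeg H (LGraph.mk G.verts E' vl' el' : LGraph Lv Le) y
      = padDeg H G y := by rintro (h | u) <;> rfl
  have h2 : (0 : ℝ) ≤ ce / 2 := by linarith
  have pointwise : ∀ x : PadV G H, cdlb ce G H x (f₁ x) ≤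
      cdlb ce (LGraph.mk G.verts E' vl' el' : LGraph Lv Le) H x (f₁ x)
        + ce / 2 * |(padDeg G H x : ℝ)
            - (padDeg (LGraph.mk G.verts E' vl' el' : LGraph Lv Le) H x : ℝ)| := by
    intro x
    unfold cdlb
    rw [hHdeg (f₁ x)]
    exact tri_helper _ h2 _ _ _
  have hDsum : ∑ x : PadV G H, |(padDeg G H x : ℝ)
      - (padDeg (LGraph.mk G.verts E' vl' el' : LGraph Lv Le) H x : ℝ)| ≤ 2 := by
    rw [Fintype.sum_sum_type]
    have hinr : ∀ w : {x // x ∈ H.verts},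
        |(padDeg G H (.inr w) : ℝ)
          - (padDeg (LGraph.mk G.verts E' vl' el' : LGraph Lv Le) H (.inr w) : ℝ)| = 0 := by
      intro w; simp [padDeg]
    rw [Finset.sum_congr rfl (fun w _ => hinr w), Finset.sum_const_zero, add_zero]
    have hinl : ∀ u : {x // x ∈ G.verts},
        |(padDeg G H (.inl u) : ℝ)
          - (padDeg (LGraph.mk G.verts E' vl' el' : LGraph Lv Le) H (.inl u) : ℝ)|
        ≤ if u.1 = a ∨ u.1 = b then 1 else 0 := by
      intro u
      by_cases h : u.1 = a ∨ u.1 = b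
      · rw [if_pos h]
        rcases h with h | h
        · show |(G.degree u.1 : ℝ) - ((LGraph.mk G.verts E' vl' el' : LGraph Lv Le).degree u.1 : ℝ)| ≤ 1
          rw [h]; exact hda
        · show |(G.degree u.1 : ℝ) - ((LGraph.mk G.verts E' vl' el' : LGraph Lv Le).degree u.1 : ℝ)| ≤ 1
          rw [h]; exact hdb
      · push_neg at h
        rw [if_neg (by push_neg; exact h)]
        show |(G.degree u.1 : ℝ) - ((LGraph.mk G.verts E' vl' el' : LGraph Lv Le).degree u.1 : ℝ)| ≤ 0
        rw [hdeg u.1 h.1 h.2]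
        simp
    calc ∑ u : {x // x ∈ G.verts}, |(padDeg G H (.inl u) : ℝ)
          - (padDeg (LGraph.mk G.verts E' vl' el' : LGraph Lv Le) H (.inl u) : ℝ)|
        ≤ ∑ u : {x // x ∈ G.verts}, if u.1 = a ∨ u.1 = b then (1 : ℝ) else 0 :=
          Finset.sum_le_sum fun u _ => hinl u
      _ = ∑ w ∈ G.verts, if w = a ∨ w = b then (1 : ℝ) else 0 := by
          rw [Finset.univ_eq_attach, Finset.sum_attach G.verts (fun w => if w = a ∨ w = b then (1 : ℝ) else 0)]
      _ = ((G.verts.filter fun w => w = a ∨ w = b).card : ℝ) := by simp [Finset.sum_boole]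
      _ ≤ 2 := by
          have hsub : (G.verts.filter fun w => w = a ∨ w = b) ⊆ {a, b} := by
            intro w hw
            simp only [Finset.mem_filter] at hw
            simp [Finset.mem_insert, hw.2]
          have := Finset.card_le_card hsub
          have h2 : ({a, b} : Finset ℕ).card ≤ 2 := Finset.card_insert_le _ _ |>.trans (by simp)
          calc ((G.verts.filter fun w => w = a ∨ w = b).card : ℝ) ≤ (({a, b} : Finset ℕ).card : ℝ) := by
                exact_mod_cast this
            _ ≤ 2 := by exact_mod_cast h2
  calc DLB ce G H ≤ ∑ x, cdlb ce G H x (f₁ x) := dlb_le ce G H f₁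
    _ ≤ ∑ x, (cdlb ce (LGraph.mk G.verts E' vl' el' : LGraph Lv Le) H x (f₁ x)
        + ce / 2 * |(padDeg G H x : ℝ)
            - (padDeg (LGraph.mk G.verts E' vl' el' : LGraph Lv Le) H x : ℝ)|) :=
      Finset.sum_le_sum fun x _ => pointwise x
    _ = (∑ x, cdlb ce (LGraph.mk G.verts E' vl' el' : LGraph Lv Le) H x (f₁ x))
        + ce / 2 * ∑ x : PadV G H, |(padDeg G H x : ℝ)
            - (padDeg (LGraph.mk G.verts E' vl' el' : LGraph Lv Le) H x : ℝ)| := by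
      rw [Finset.sum_add_distrib, Finset.mul_sum]
    _ ≤ ce + DLB ce (LGraph.mk G.verts E' vl' el') H := by
      rw [← hf₁]
      nlinarith [hDsum]

end Step

section VertexStep

lemma dlb_le_addV (ce : ℝ) (hce : 0 ≤ ce) (G H : LGraph Lv Le) (v : ℕ) (hv : v ∉ G.verts)
    (hiso : ∀ e ∈ G.edges, v ∉ e) (vl' : ℕ → Lv) :
    DLB ce G H ≤ DLB ce (LGraph.mk (insert v G.verts) G.edges vl' G.el) H := by
  obtain ⟨f₁, hf₁⟩ := dlb_attained ce (LGraph.mk (insert v G.verts) G.edges vl' G.el : LGraph Lv Le) H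
  have h2 : (0 : ℝ) ≤ ce / 2 := by linarith
  let eIns : {x // x ∈ insert v G.verts} ≃ Option {x // x ∈ G.verts} :=
    Finset.subtypeInsertEquivOption hv
  let eL : PadV (LGraph.mk (insert v G.verts) G.edges vl' G.el : LGraph Lv Le) H ≃ Option (PadV G H) :=
    (Equiv.sumCongr eIns (Equiv.refl _)).trans optSumL
  let eR : PadV H (LGraph.mk (insert v G.verts) G.edges vl' G.el : LGraph Lv Le) ≃ Option (PadV H G) :=
    (Equiv.sumCongr (Equiv.refl _) eIns).trans optSumR
  let eo : Option (PadV G H) ≃ Option (PadV H G) := eL.symm.trans (f₁.trans eR)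
  obtain ⟨e', he'⟩ := key (ce / 2) h2 (padDeg G H) (padDeg H G) eo
  have hL : ∀ y : PadV (LGraph.mk (insert v G.verts) G.edges vl' G.el : LGraph Lv Le) H,
      ((eL y).elim 0 (padDeg G H) : ℕ)
        = padDeg (LGraph.mk (insert v G.verts) G.edges vl' G.el : LGraph Lv Le) H y := by
    rintro (u | w)
    · by_cases hu : u.1 = v
      · have h1 : eL (Sum.inl u) = none := by
          simp [eL, optSumL, eIns, Finset.subtypeInsertEquivOption, hu]
        rw [h1]
        show (0 : ℕ) = (LGraph.mk (insert v G.verts) G.edges vl' G.el : LGraph Lv Le).degree u.1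
        rw [hu]
        exact (degree_eq_zero _ v hiso).symm
      · have h1 : eL (Sum.inl u) = some (Sum.inl ⟨u.1, (Finset.mem_insert.mp u.2).resolve_left hu⟩) := by
          simp [eL, optSumL, eIns, Finset.subtypeInsertEquivOption, hu]
        rw [h1]
        rfl
    · rfl
  have hR : ∀ z : PadV H (LGraph.mk (insert v G.verts) G.edges vl' G.el : LGraph Lv Le),
      ((eR z).elim 0 (padDeg H G) : ℕ)
        = padDeg H (LGraph.mk (insert v G.verts) G.edges vl' G.el : LGraph Lv Le) z := by
    rintro (h | u)
    · rfl
    · by_cases hu : u.1 = v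
      · have h1 : eR (Sum.inr u) = none := by
          simp [eR, optSumR, eIns, Finset.subtypeInsertEquivOption, hu]
        rw [h1]; rfl
      · have h1 : eR (Sum.inr u) = some (Sum.inr ⟨u.1, (Finset.mem_insert.mp u.2).resolve_left hu⟩) := by
          simp [eR, optSumR, eIns, Finset.subtypeInsertEquivOption, hu]
        rw [h1]; rfl
  have hfe : ∀ y, eo (eL y) = eR (f₁ y) := by
    intro y; simp [eo]
  have hreindex : (∑ x : Option (PadV G H),
      ce / 2 * |((x.elim 0 (padDeg G H) : ℕ) : ℝ) - (((eo x).elim 0 (padDeg H G) : ℕ) : ℝ)|)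
      = ∑ y, cdlb ce (LGraph.mk (insert v G.verts) G.edges vl' G.el : LGraph Lv Le) H y (f₁ y) := by
    rw [← Equiv.sum_comp eL (fun x => ce / 2 *
      |((x.elim 0 (padDeg G H) : ℕ) : ℝ) - (((eo x).elim 0 (padDeg H G) : ℕ) : ℝ)|)]
    refine Finset.sum_congr rfl fun y _ => ?_
    rw [hL y, hfe y, hR (f₁ y)]
    rfl
  calc DLB ce G H ≤ ∑ x, cdlb ce G H x (e' x) := dlb_le ce G H e'
    _ = ∑ a, ce / 2 * |((padDeg G H a : ℕ) : ℝ) - ((padDeg H G (e' a) : ℕ) : ℝ)| := rfl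
    _ ≤ ∑ x : Option (PadV G H),
        ce / 2 * |((x.elim 0 (padDeg G H) : ℕ) : ℝ) - (((eo x).elim 0 (padDeg H G) : ℕ) : ℝ)| := he'
    _ = ∑ y, cdlb ce (LGraph.mk (insert v G.verts) G.edges vl' G.el : LGraph Lv Le) H y (f₁ y) := hreindex
    _ = DLB ce (LGraph.mk (insert v G.verts) G.edges vl' G.el) H := hf₁.symm

lemma dlb_le_delV (ce : ℝ) (hce : 0 ≤ ce) (G H : LGraph Lv Le) (v : ℕ) (hv : v ∈ G.verts)
    (hiso : ∀ e ∈ G.edges, v ∉ e) :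
    DLB ce G H ≤ DLB ce (LGraph.mk (G.verts.erase v) G.edges G.vl G.el) H := by
  obtain ⟨f₁, hf₁⟩ := dlb_attained ce (LGraph.mk (G.verts.erase v) G.edges G.vl G.el : LGraph Lv Le) H
  have hv' : v ∉ G.verts.erase v := Finset.notMem_erase v _
  have hins : insert v (G.verts.erase v) = G.verts := Finset.insert_erase hv
  let eSub : {x // x ∈ G.verts} ≃ {x // x ∈ insert v (G.verts.erase v)} :=
    Equiv.subtypeEquivRight (fun x => by rw [hins])
  let eIns : {x // x ∈ insert v (G.verts.erase v)} ≃ Option {x // x ∈ G.verts.erase v} :=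
    Finset.subtypeInsertEquivOption hv'
  let eL : PadV G H ≃ Option (PadV (LGraph.mk (G.verts.erase v) G.edges G.vl G.el : LGraph Lv Le) H) :=
    (Equiv.sumCongr (eSub.trans eIns) (Equiv.refl _)).trans optSumL
  let eR : PadV H G ≃ Option (PadV H (LGraph.mk (G.verts.erase v) G.edges G.vl G.el : LGraph Lv Le)) :=
    (Equiv.sumCongr (Equiv.refl _) (eSub.trans eIns)).trans optSumR
  let f : PadV G H ≃ PadV H G := eL.trans (f₁.optionCongr.trans eR.symm)
  have hL : ∀ x : PadV G H,
      ((eL x).elim 0 (padDeg (LGraph.mk (G.verts.erase v) G.edges G.vl G.el : LGraph Lv Le) H) : ℕ)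
        = padDeg G H x := by
    rintro (u | w)
    · by_cases hu : u.1 = v
      · have h1 : eL (Sum.inl u) = none := by
          simp [eL, optSumL, eIns, eSub, Finset.subtypeInsertEquivOption,
            Equiv.subtypeEquivRight_apply, hu]
        rw [h1]
        show (0 : ℕ) = G.degree u.1
        rw [hu]
        exact (degree_eq_zero _ v hiso).symm
      · have h1 : eL (Sum.inl u) = some (Sum.inl ⟨u.1, by
            refine Finset.mem_erase.mpr ⟨hu, u.2⟩⟩) := by
          simp [eL, optSumL, eIns, eSub, Finset.subtypeInsertEquivOption,
            Equiv.subtypeEquivRight_apply, hu]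
        rw [h1]
        rfl
    · rfl
  have hR : ∀ z : PadV H G,
      ((eR z).elim 0 (padDeg H (LGraph.mk (G.verts.erase v) G.edges G.vl G.el : LGraph Lv Le)) : ℕ)
        = padDeg H G z := by
    rintro (h | u)
    · rfl
    · by_cases hu : u.1 = v
      · have h1 : eR (Sum.inr u) = none := by
          simp [eR, optSumR, eIns, eSub, Finset.subtypeInsertEquivOption,
            Equiv.subtypeEquivRight_apply, hu]
        rw [h1]; rfl
      · have h1 : eR (Sum.inr u) = some (Sum.inr ⟨u.1, Finset.mem_erase.mpr ⟨hu, u.2⟩⟩) := by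
          simp [eR, optSumR, eIns, eSub, Finset.subtypeInsertEquivOption,
            Equiv.subtypeEquivRight_apply, hu]
        rw [h1]; rfl
  have hfe : ∀ x, eR (f x) = f₁.optionCongr (eL x) := by
    intro x; simp [f]
  have hsum : ∑ x, cdlb ce G H x (f x)
      = ∑ y, cdlb ce (LGraph.mk (G.verts.erase v) G.edges G.vl G.el : LGraph Lv Le) H y (f₁ y) := by
    calc ∑ x, cdlb ce G H x (f x)
        = ∑ x : PadV G H, ce / 2 *
          |(((eL x).elim 0 (padDeg (LGraph.mk (G.verts.erase v) G.edges G.vl G.el : LGraph Lv Le) H) : ℕ) : ℝ)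
            - (((f₁.optionCongr (eL x)).elim 0
                (padDeg H (LGraph.mk (G.verts.erase v) G.edges G.vl G.el : LGraph Lv Le)) : ℕ) : ℝ)| := by
          refine Finset.sum_congr rfl fun x _ => ?_
          rw [hL x, ← hfe x, hR (f x)]
          rfl
      _ = ∑ w : Option (PadV (LGraph.mk (G.verts.erase v) G.edges G.vl G.el : LGraph Lv Le) H),
          ce / 2 * |((w.elim 0 (padDeg (LGraph.mk (G.verts.erase v) G.edges G.vl G.el : LGraph Lv Le) H) : ℕ) : ℝ)
            - (((f₁.optionCongr w).elim 0
                (padDeg H (LGraph.mk (G.verts.erase v) G.edges G.vl G.el : LGraph Lv Le)) : ℕ) : ℝ)| :=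
          Equiv.sum_comp eL (fun w =>
            ce / 2 * |((w.elim 0 (padDeg (LGraph.mk (G.verts.erase v) G.edges G.vl G.el : LGraph Lv Le) H) : ℕ) : ℝ)
              - (((f₁.optionCongr w).elim 0
                  (padDeg H (LGraph.mk (G.verts.erase v) G.edges G.vl G.el : LGraph Lv Le)) : ℕ) : ℝ)|)
      _ = ∑ y, cdlb ce (LGraph.mk (G.verts.erase v) G.edges G.vl G.el : LGraph Lv Le) H y (f₁ y) := by
          rw [Fintype.sum_option]
          simp only [Option.elim, Equiv.optionCongr_apply, Option.map_none, Option.map_some]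
          norm_num
          rfl
  calc DLB ce G H ≤ ∑ x, cdlb ce G H x (f x) := dlb_le ce G H f
    _ = ∑ y, cdlb ce (LGraph.mk (G.verts.erase v) G.edges G.vl G.el : LGraph Lv Le) H y (f₁ y) := hsum
    _ = DLB ce (LGraph.mk (G.verts.erase v) G.edges G.vl G.el) H := hf₁.symm

end VertexStep

section OpStep

lemma dlb_congr_labels (ce : ℝ) (G H : LGraph Lv Le) (vl' : ℕ → Lv) (el' : Sym2 ℕ → Le) :
    DLB ce G H ≤ DLB ce (LGraph.mk G.verts G.edges vl' el') H := by
  obtain ⟨f₁, hf₁⟩ := dlb_attained ce (LGraph.mk G.verts G.edges vl' el' : LGraph Lv Le) H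
  have h1 : ∀ x : PadV G H, padDeg (LGraph.mk G.verts G.edges vl' el' : LGraph Lv Le) H x
      = padDeg G H x := by rintro (u | w) <;> rfl
  have h2 : ∀ y : PadV H G, padDeg H (LGraph.mk G.verts G.edges vl' el' : LGraph Lv Le) y
      = padDeg H G y := by rintro (h | u) <;> rfl
  calc DLB ce G H ≤ ∑ x, cdlb ce G H x (f₁ x) := dlb_le ce G H f₁
    _ = ∑ y, cdlb ce (LGraph.mk G.verts G.edges vl' el' : LGraph Lv Le) H y (f₁ y) := by
        refine Finset.sum_congr rfl fun x _ => ?_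
        unfold cdlb
        rw [h1 x, h2 (f₁ x)]
    _ = DLB ce (LGraph.mk G.verts G.edges vl' el') H := hf₁.symm

lemma wf_apply {G G₁ : LGraph Lv Le} {o : Op Lv Le} (hG : G.WF) (h : apply o G = some G₁) :
    G₁.WF := by
  obtain ⟨hd, hv⟩ := hG
  cases o with
  | addV v l =>
    rw [apply] at h
    split_ifs at h with hc
    obtain rfl := Option.some.inj h
    exact ⟨hd, fun e he x hx => Finset.mem_insert_of_mem (hv e he x hx)⟩
  | delV v =>
    rw [apply] at h
    split_ifs at h with hc
    obtain rfl := Option.some.inj h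
    refine ⟨hd, fun e he x hx => Finset.mem_erase.mpr ⟨?_, hv e he x hx⟩⟩
    intro hxv; subst hxv; exact hc.2 e he hx
  | relV v l =>
    rw [apply] at h
    split_ifs at h with hc
    obtain rfl := Option.some.inj h
    exact ⟨hd, hv⟩
  | addE u v l =>
    rw [apply] at h
    split_ifs at h with hc
    obtain rfl := Option.some.inj h
    obtain ⟨hu, hv2, huv, hne⟩ := hc
    constructor
    · intro e he
      rcases Finset.mem_insert.mp he with rfl | he'
      · rw [Sym2.mk_isDiag_iff]; exact huv
      · exact hd e he'
    · intro e he x hx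
      rcases Finset.mem_insert.mp he with rfl | he'
      · rcases Sym2.mem_iff.mp hx with rfl | rfl
        · exact hu
        · exact hv2
      · exact hv e he' x hx
  | delE e =>
    rw [apply] at h
    split_ifs at h with hc
    obtain rfl := Option.some.inj h
    exact ⟨fun e' he' => hd e' (Finset.mem_of_mem_erase he'),
      fun e' he' => hv e' (Finset.mem_of_mem_erase he')⟩
  | relE e l =>
    rw [apply] at h
    split_ifs at h with hc
    obtain rfl := Option.some.inj h
    exact ⟨hd, hv⟩

lemma dlb_le_op (cv cvl ce cel : ℝ) (hcv : 0 ≤ cv) (hcvl : 0 ≤ cvl) (hce : 0 ≤ ce)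
    (hcel : 0 ≤ cel) (G G₁ H : LGraph Lv Le) (hG : G.WF) (o : Op Lv Le)
    (h : apply o G = some G₁) :
    DLB ce G H ≤ opCost cv cvl ce cel o + DLB ce G₁ H := by
  cases o with
  | addV v l =>
    rw [apply] at h
    split_ifs at h with hc
    obtain rfl := Option.some.inj h
    have hiso : ∀ e ∈ G.edges, v ∉ e := fun e he hve => hc (hG.2 e he v hve)
    have := dlb_le_addV ce hce G H v hc hiso (Function.update G.vl v l)
    show DLB ce G H ≤ cv + _
    linarith
  | delV v =>
    rw [apply] at h
    split_ifs at h with hc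
    obtain rfl := Option.some.inj h
    have := dlb_le_delV ce hce G H v hc.1 hc.2
    show DLB ce G H ≤ cv + _
    linarith
  | relV v l =>
    rw [apply] at h
    split_ifs at h with hc
    obtain rfl := Option.some.inj h
    have := dlb_congr_labels ce G H (Function.update G.vl v l) G.el
    show DLB ce G H ≤ cvl + _
    linarith
  | addE u v l =>
    rw [apply] at h
    split_ifs at h with hc
    obtain rfl := Option.some.inj h
    obtain ⟨hu, hv2, huv, hne⟩ := hc
    have hdegs : ∀ w, (LGraph.mk G.verts (insert s(u, v) G.edges) G.vl
        (Function.update G.el s(u, v) l) : LGraph Lv Le).degree w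
        = if w ∈ s(u, v) then G.degree w + 1 else G.degree w := by
      intro w
      show (Finset.filter (fun e => w ∈ e) (insert s(u, v) G.edges)).card = _
      rw [Finset.filter_insert]
      split_ifs with hw
      · rw [Finset.card_insert_of_notMem (fun hmem => hne (Finset.mem_filter.mp hmem).1)]
        rfl
      · rfl
    refine dlb_le_edge ce hce G H _ _ _ u v (fun w hwu hwv => ?_) ?_ ?_
    · rw [hdegs w, if_neg]
      rw [Sym2.mem_iff]
      push_neg
      exact ⟨hwu, hwv⟩
    · rw [hdegs u, if_pos (Sym2.mem_mk_left u v)]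
      push_cast
      rw [show ((G.degree u : ℝ) - (G.degree u + 1)) = -1 by ring]
      simp
    · rw [hdegs v, if_pos (Sym2.mem_mk_right u v)]
      push_cast
      rw [show ((G.degree v : ℝ) - (G.degree v + 1)) = -1 by ring]
      simp
  | delE e =>
    rw [apply] at h
    split_ifs at h with hc
    obtain rfl := Option.some.inj h
    obtain ⟨⟨p, q⟩, rfl⟩ := Quot.exists_rep e
    have hpq : p ≠ q := by
      have := hG.1 _ hc
      rwa [show Quot.mk (Sym2.Rel ℕ) (p, q) = s(p, q) from rfl, Sym2.mk_isDiag_iff] at this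
    have hdegs : ∀ w, w ∈ s(p, q) →
        G.degree w = (LGraph.mk G.verts (G.edges.erase s(p, q)) G.vl G.el : LGraph Lv Le).degree w + 1 := by
      intro w hw
      have hmem : s(p, q) ∈ G.edges.filter (fun e => w ∈ e) := Finset.mem_filter.mpr ⟨hc, hw⟩
      show (G.edges.filter (fun e => w ∈ e)).card
        = ((G.edges.erase s(p, q)).filter (fun e => w ∈ e)).card + 1
      rw [Finset.filter_erase, Finset.card_erase_of_mem hmem]
      exact (Nat.succ_pred_eq_of_pos (Finset.card_pos.mpr ⟨_, hmem⟩)).symm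
    have hdegn : ∀ w, w ∉ s(p, q) →
        (LGraph.mk G.verts (G.edges.erase s(p, q)) G.vl G.el : LGraph Lv Le).degree w = G.degree w := by
      intro w hw
      show ((G.edges.erase s(p, q)).filter (fun e => w ∈ e)).card
        = (G.edges.filter (fun e => w ∈ e)).card
      rw [Finset.filter_erase, Finset.erase_eq_of_notMem]
      intro hmem
      exact hw (Finset.mem_filter.mp hmem).2
    refine dlb_le_edge ce hce G H _ _ _ p q (fun w hwp hwq => ?_) ?_ ?_
    · exact hdegn w (by rw [Sym2.mem_iff]; push_neg; exact ⟨hwp, hwq⟩)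
    · rw [hdegs p (Sym2.mem_mk_left p q)]
      push_cast
      rw [show ((((LGraph.mk G.verts (G.edges.erase s(p, q)) G.vl G.el : LGraph Lv Le).degree p : ℝ) + 1)
        - ((LGraph.mk G.verts (G.edges.erase s(p, q)) G.vl G.el : LGraph Lv Le).degree p : ℝ)) = 1 by ring]
      simp
    · rw [hdegs q (Sym2.mem_mk_right p q)]
      push_cast
      rw [show ((((LGraph.mk G.verts (G.edges.erase s(p, q)) G.vl G.el : LGraph Lv Le).degree q : ℝ) + 1)
        - ((LGraph.mk G.verts (G.edges.erase s(p, q)) G.vl G.el : LGraph Lv Le).degree q : ℝ)) = 1 by ring]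
      simp
  | relE e l =>
    rw [apply] at h
    split_ifs at h with hc
    obtain rfl := Option.some.inj h
    have := dlb_congr_labels ce G H G.vl (Function.update G.el e l)
    show DLB ce G H ≤ cel + _
    linarith

end OpStep

section IsoBase

lemma degree_iso (K H : LGraph Lv Le) (hK : K.WF) (hH : H.WF) (f : ℕ → ℕ)
    (hbij : Set.BijOn f ↑K.verts ↑H.verts)
    (hadj : ∀ u ∈ K.verts, ∀ v ∈ K.verts, (s(u, v) ∈ K.edges ↔ s(f u, f v) ∈ H.edges))
    (v : ℕ) (hv : v ∈ K.verts) : K.degree v = H.degree (f v) := by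
  unfold degree
  refine Finset.card_bij (fun e _ => Sym2.map f e) ?_ ?_ ?_
  · intro e he
    obtain ⟨he1, hve⟩ := Finset.mem_filter.mp he
    obtain ⟨w, rfl⟩ : ∃ w, s(v, w) = e := ⟨_, Sym2.other_spec hve⟩
    have hw : w ∈ K.verts := hK.2 _ he1 w (Sym2.mem_mk_right _ _)
    show Sym2.map f s(v, w) ∈ _
    rw [Sym2.map_pair_eq]
    exact Finset.mem_filter.mpr ⟨(hadj v hv w hw).mp he1, Sym2.mem_mk_left _ _⟩
  · intro e₁ he₁ e₂ he₂ heq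
    obtain ⟨h11, h12⟩ := Finset.mem_filter.mp he₁
    obtain ⟨h21, h22⟩ := Finset.mem_filter.mp he₂
    obtain ⟨w₁, rfl⟩ : ∃ w, s(v, w) = e₁ := ⟨_, Sym2.other_spec h12⟩
    obtain ⟨w₂, rfl⟩ : ∃ w, s(v, w) = e₂ := ⟨_, Sym2.other_spec h22⟩
    have hw₁ : w₁ ∈ K.verts := hK.2 _ h11 w₁ (Sym2.mem_mk_right _ _)
    have hw₂ : w₂ ∈ K.verts := hK.2 _ h21 w₂ (Sym2.mem_mk_right _ _)
    have heq' : s(f v, f w₁) = s(f v, f w₂) := by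
      rw [← Sym2.map_pair_eq f v w₁, ← Sym2.map_pair_eq f v w₂]
      exact heq
    rcases Sym2.eq_iff.mp heq' with ⟨-, h⟩ | ⟨h1, h2⟩
    · rw [hbij.2.1 hw₁ hw₂ h]
    · exfalso
      have hvw : v = w₂ := hbij.2.1 hv hw₂ h1
      have hdiag := hK.1 _ h21
      rw [Sym2.mk_isDiag_iff] at hdiag
      exact hdiag hvw
  · intro e' he'
    obtain ⟨he1, hfe⟩ := Finset.mem_filter.mp he'
    obtain ⟨y, rfl⟩ : ∃ y, s(f v, y) = e' := ⟨_, Sym2.other_spec hfe⟩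
    have hy : y ∈ H.verts := hH.2 _ he1 y (Sym2.mem_mk_right _ _)
    obtain ⟨w, hw, hfw⟩ := hbij.2.2 hy
    refine ⟨s(v, w), Finset.mem_filter.mpr ⟨?_, Sym2.mem_mk_left _ _⟩, ?_⟩
    · refine (hadj v hv w hw).mpr ?_
      rw [hfw]
      exact he1
    · show Sym2.map f s(v, w) = _
      rw [Sym2.map_pair_eq, hfw]

lemma dlb_iso_le_zero (ce : ℝ) (K H : LGraph Lv Le) (hK : K.WF) (hH : H.WF)
    (h : Iso K H) : DLB ce K H ≤ 0 := by
  obtain ⟨f, hbij, hvl, hadj, hel⟩ := h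
  let eV : {x // x ∈ K.verts} ≃ {x // x ∈ H.verts} := hbij.equiv f
  refine le_trans (dlb_le ce K H (Equiv.sumCongr eV eV.symm)) (le_of_eq ?_)
  refine Finset.sum_eq_zero fun x _ => ?_
  rcases x with u | w
  · show ce / 2 * |((K.degree u.1 : ℕ) : ℝ) - ((H.degree (eV u).1 : ℕ) : ℝ)| = 0
    have hval : ((eV u).1 : ℕ) = f u.1 := rfl
    rw [hval, ← degree_iso K H hK hH f hbij hadj u.1 u.2]
    simp
  · show ce / 2 * |((0 : ℕ) : ℝ) - ((0 : ℕ) : ℝ)| = 0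
    simp

end IsoBase

section Path

lemma applyList_append (l₁ l₂ : List (Op Lv Le)) (G : LGraph Lv Le) :
    applyList (l₁ ++ l₂) G = (applyList l₁ G).bind (applyList l₂) := by
  induction l₁ generalizing G with
  | nil => rfl
  | cons o l ih =>
    show (apply o G).bind (applyList (l ++ l₂)) = ((apply o G).bind (applyList l)).bind _
    rcases apply o G with _ | G'
    · rfl
    · exact ih G'

lemma dlb_le_path (cv cvl ce cel : ℝ) (hcv : 0 ≤ cv) (hcvl : 0 ≤ cvl) (hce : 0 ≤ ce)
    (hcel : 0 ≤ cel) (H : LGraph Lv Le) (hH : H.WF) (ops : List (Op Lv Le)) :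
    ∀ (G : LGraph Lv Le), G.WF → ∀ K, applyList ops G = some K → Iso K H →
      DLB ce G H ≤ (ops.map (opCost cv cvl ce cel)).sum := by
  induction ops with
  | nil =>
    intro G hG K hap hiso
    rw [show applyList [] G = some G from rfl] at hap
    obtain rfl := Option.some.inj hap
    simpa using dlb_iso_le_zero ce G H hG hH hiso
  | cons o ops ih =>
    intro G hG K hap hiso
    rw [show applyList (o :: ops) G = (apply o G).bind (applyList ops) from rfl] at hap
    obtain ⟨G₁, h1, h2⟩ := Option.bind_eq_some_iff.mp hap
    calc DLB ce G H ≤ opCost cv cvl ce cel o + DLB ce G₁ H :=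
          dlb_le_op cv cvl ce cel hcv hcvl hce hcel G G₁ H hG o h1
      _ ≤ opCost cv cvl ce cel o + (ops.map (opCost cv cvl ce cel)).sum :=
          add_le_add_right (ih G₁ (wf_apply hG h1) K h2 hiso) _
      _ = ((o :: ops).map (opCost cv cvl ce cel)).sum := by simp

end Path

section Construct

lemma applyList_delE_all (l : List (Sym2 ℕ)) :
    ∀ G : LGraph Lv Le, l.Nodup → (∀ e ∈ l, e ∈ G.edges) →
      applyList (l.map Op.delE) G
        = some (LGraph.mk G.verts (G.edges \ l.toFinset) G.vl G.el) := by
  induction l with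
  | nil =>
    intro G _ _
    show some G = _
    rw [List.toFinset_nil, Finset.sdiff_empty]
  | cons e l ih =>
    intro G hnd hsub
    obtain ⟨hne, hnd'⟩ := List.nodup_cons.mp hnd
    show (apply (Op.delE e) G).bind _ = _
    rw [apply, if_pos (hsub e (List.mem_cons_self)), Option.bind_some]
    rw [ih (LGraph.mk G.verts (G.edges.erase e) G.vl G.el) hnd'
      (fun e' he' => Finset.mem_erase.mpr ⟨fun h => hne (h ▸ he'), hsub e' (List.mem_cons_of_mem e he')⟩)]
    have hsd : (G.edges.erase e) \ l.toFinset = G.edges \ (e :: l).toFinset := by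
      ext x
      simp only [Finset.mem_sdiff, Finset.mem_erase, List.toFinset_cons, Finset.mem_insert]
      tauto
    rw [hsd]

lemma applyList_delV_all (l : List ℕ) :
    ∀ G : LGraph Lv Le, G.edges = ∅ → l.Nodup → (∀ v ∈ l, v ∈ G.verts) →
      applyList (l.map Op.delV) G
        = some (LGraph.mk (G.verts \ l.toFinset) G.edges G.vl G.el) := by
  induction l with
  | nil =>
    intro G _ _ _
    show some G = _
    rw [List.toFinset_nil, Finset.sdiff_empty]
  | cons v l ih =>
    intro G hE hnd hsub
    obtain ⟨hne, hnd'⟩ := List.nodup_cons.mp hnd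
    show (apply (Op.delV v) G).bind _ = _
    rw [apply, if_pos ⟨hsub v (List.mem_cons_self), by rw [hE]; simp⟩, Option.bind_some]
    rw [ih (LGraph.mk (G.verts.erase v) G.edges G.vl G.el) hE hnd'
      (fun v' hv' => Finset.mem_erase.mpr ⟨fun h => hne (h ▸ hv'), hsub v' (List.mem_cons_of_mem v hv')⟩)]
    have hsd : (G.verts.erase v) \ l.toFinset = G.verts \ (v :: l).toFinset := by
      ext x
      simp only [Finset.mem_sdiff, Finset.mem_erase, List.toFinset_cons, Finset.mem_insert]
      tauto
    rw [hsd]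

lemma applyList_addV_all (vlH : ℕ → Lv) (l : List ℕ) :
    ∀ G : LGraph Lv Le, l.Nodup → (∀ v ∈ l, v ∉ G.verts) →
      ∃ G', applyList (l.map fun v => Op.addV v (vlH v)) G = some G' ∧
        G'.verts = G.verts ∪ l.toFinset ∧ G'.edges = G.edges ∧
        (∀ w ∈ l, G'.vl w = vlH w) ∧ (∀ w, w ∉ l → G'.vl w = G.vl w) ∧ G'.el = G.el := by
  induction l with
  | nil =>
    intro G _ _
    exact ⟨G, rfl, by simp, rfl, by simp, fun _ _ => rfl, rfl⟩
  | cons v l ih =>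
    intro G hnd hnew
    obtain ⟨hne, hnd'⟩ := List.nodup_cons.mp hnd
    obtain ⟨G', hap, hverts, hedges, hvl1, hvl2, hel⟩ :=
      ih (LGraph.mk (insert v G.verts) G.edges (Function.update G.vl v (vlH v)) G.el) hnd'
        (fun v' hv' => by
          rw [Finset.mem_insert]
          push_neg
          exact ⟨fun h => hne (h ▸ hv'), hnew v' (List.mem_cons_of_mem v hv')⟩)
    refine ⟨G', ?_, ?_, hedges, ?_, ?_, hel⟩
    · show (apply (Op.addV v (vlH v)) G).bind _ = _
      rw [apply, if_neg (hnew v (List.mem_cons_self)), Option.bind_some]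
      exact hap
    · rw [hverts]
      show insert v G.verts ∪ l.toFinset = _
      rw [List.toFinset_cons]
      ext x
      simp only [Finset.mem_union, Finset.mem_insert]
      tauto
    · intro w hw
      rcases List.mem_cons.mp hw with rfl | hw'
      · rw [hvl2 w hne]
        show Function.update G.vl w (vlH w) w = vlH w
        rw [Function.update_self]
      · exact hvl1 w hw'
    · intro w hw
      rw [List.mem_cons] at hw
      push_neg at hw
      rw [hvl2 w hw.2]
      show Function.update G.vl v (vlH v) w = G.vl w
      rw [Function.update_of_ne hw.1]

lemma applyList_addE_all (elH : Sym2 ℕ → Le) (l : List (Sym2 ℕ)) :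
    ∀ G : LGraph Lv Le, l.Nodup → (∀ e ∈ l, ¬ e.IsDiag) →
      (∀ e ∈ l, ∀ x ∈ e, x ∈ G.verts) → (∀ e ∈ l, e ∉ G.edges) →
      ∃ G', applyList (l.map fun e => Op.addE e.out.1 e.out.2 (elH e)) G = some G' ∧
        G'.verts = G.verts ∧ G'.edges = G.edges ∪ l.toFinset ∧ G'.vl = G.vl ∧
        (∀ e ∈ l, G'.el e = elH e) ∧ (∀ e, e ∉ l → G'.el e = G.el e) := by
  induction l with
  | nil =>
    intro G _ _ _ _
    exact ⟨G, rfl, rfl, by simp, rfl, by simp, fun _ _ => rfl⟩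
  | cons e l ih =>
    intro G hnd hdiag hvert hnew
    obtain ⟨hne, hnd'⟩ := List.nodup_cons.mp hnd
    have hmk : s(e.out.1, e.out.2) = e := Quot.out_eq e
    have hout : e.out.1 ≠ e.out.2 := by
      intro hcon
      apply hdiag e (List.mem_cons_self)
      rw [← hmk, Sym2.mk_isDiag_iff]
      exact hcon
    obtain ⟨G', hap, hverts, hedges, hvl, hel1, hel2⟩ :=
      ih (LGraph.mk G.verts (insert e G.edges) G.vl (Function.update G.el e (elH e))) hnd'
        (fun e' he' => hdiag e' (List.mem_cons_of_mem e he'))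
        (fun e' he' x hx => hvert e' (List.mem_cons_of_mem e he') x hx)
        (fun e' he' => by
          show e' ∉ insert e G.edges
          rw [Finset.mem_insert]
          push_neg
          exact ⟨fun h => hne (h ▸ he'), hnew e' (List.mem_cons_of_mem e he')⟩)
    refine ⟨G', ?_, hverts, ?_, hvl, ?_, ?_⟩
    · show (apply (Op.addE e.out.1 e.out.2 (elH e)) G).bind _ = _
      rw [apply, if_pos ⟨hvert e (List.mem_cons_self) _ (Sym2.out_fst_mem e),
        hvert e (List.mem_cons_self) _ (Sym2.out_snd_mem e), hout,
        by rw [hmk]; exact hnew e (List.mem_cons_self)⟩, Option.bind_some, hmk]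
      exact hap
    · rw [hedges]
      show insert e G.edges ∪ l.toFinset = _
      rw [List.toFinset_cons]
      ext x
      simp only [Finset.mem_union, Finset.mem_insert]
      tauto
    · intro e' he'
      rcases List.mem_cons.mp he' with rfl | he''
      · rw [hel2 e' hne]
        show Function.update G.el e' (elH e') e' = elH e'
        rw [Function.update_self]
      · exact hel1 e' he''
    · intro e' he'
      rw [List.mem_cons] at he'
      push_neg at he'
      rw [hel2 e' he'.2]
      show Function.update G.el e (elH e) e' = G.el e'
      rw [Function.update_of_ne he'.1]

lemma ged_set_nonempty (cv cvl ce cel : ℝ) (G H : LGraph Lv Le) (hG : G.WF) (hH : H.WF) :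
    {r | ∃ (ops : List (Op Lv Le)) (H' : LGraph Lv Le),
      applyList ops G = some H' ∧ Iso H' H
        ∧ r = (ops.map (opCost cv cvl ce cel)).sum}.Nonempty := by
  have h1 := applyList_delE_all (Lv := Lv) (Le := Le) G.edges.toList G (Finset.nodup_toList _)
    (fun e he => Finset.mem_toList.mp he)
  rw [Finset.toList_toFinset, Finset.sdiff_self] at h1
  have h2 := applyList_delV_all (Lv := Lv) (Le := Le) G.verts.toList
    (LGraph.mk G.verts ∅ G.vl G.el) rfl (Finset.nodup_toList _)
    (fun v hv => Finset.mem_toList.mp hv)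
  rw [Finset.toList_toFinset, Finset.sdiff_self] at h2
  obtain ⟨K₃, h3, h3v, h3e, h3vl1, h3vl2, h3el⟩ := applyList_addV_all H.vl H.verts.toList
    (LGraph.mk ∅ ∅ G.vl G.el) (Finset.nodup_toList _)
    (fun v _ => Finset.notMem_empty v)
  rw [show (LGraph.mk (∅ : Finset ℕ) (∅ : Finset (Sym2 ℕ)) G.vl G.el : LGraph Lv Le).verts
    = ∅ from rfl, Finset.empty_union, Finset.toList_toFinset] at h3v
  rw [show (LGraph.mk (∅ : Finset ℕ) (∅ : Finset (Sym2 ℕ)) G.vl G.el : LGraph Lv Le).edges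
    = ∅ from rfl] at h3e
  obtain ⟨K₄, h4, h4v, h4e, h4vl, h4el1, h4el2⟩ := applyList_addE_all H.el H.edges.toList K₃
    (Finset.nodup_toList _)
    (fun e he => hH.1 e (Finset.mem_toList.mp he))
    (fun e he x hx => by rw [h3v]; exact hH.2 e (Finset.mem_toList.mp he) x hx)
    (fun e _ => by rw [h3e]; exact Finset.notMem_empty e)
  rw [h3e, Finset.empty_union, Finset.toList_toFinset] at h4e
  rw [h3v] at h4v
  refine ⟨_, (G.edges.toList.map Op.delE) ++ ((G.verts.toList.map Op.delV)
    ++ ((H.verts.toList.map fun v => Op.addV v (H.vl v))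
    ++ (H.edges.toList.map fun e => Op.addE e.out.1 e.out.2 (H.el e)))), K₄, ?_, ?_, rfl⟩
  · rw [applyList_append, h1, Option.bind_some, applyList_append, h2, Option.bind_some,
      applyList_append, h3, Option.bind_some]
    exact h4
  · refine ⟨id, ?_, ?_, ?_, ?_⟩
    · rw [h4v]
      exact Set.bijOn_id _
    · intro v hv
      rw [h4vl, h3vl1 v (Finset.mem_toList.mpr (by rw [← h4v]; exact hv))]
      rfl
    · intro u _ v _
      rw [h4e]
      exact Iff.rfl
    · intro u _ v _ he
      rw [h4e] at he
      exact (h4el1 _ (Finset.mem_toList.mpr he)).symm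

end Construct

end LGraph

open LGraph in
/-- For any two graphs `G` and `H`, the degree lower bound `DLB(G,H)` —
the minimal cost of a bijection between the dummy-padded vertex sets under the ground cost
`c_dlb(u,v) = (ce/2)·|δ(u) − δ(v)|` (dummies having degree 0) — is at most the graph edit
distance `GED(G,H)`. -/
theorem dlb_le_ged {Lv Le : Type} (cv cvl ce cel : ℝ)
    (hcv : 0 ≤ cv) (hcvl : 0 ≤ cvl) (hce : 0 ≤ ce) (hcel : 0 ≤ cel)
    (G H : LGraph Lv Le) (hG : G.WF) (hH : H.WF) :
    DLB ce G H ≤ GED cv cvl ce cel G H := by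
  refine le_csInf (ged_set_nonempty cv cvl ce cel G H hG hH) ?_
  rintro r ⟨ops, H', hap, hiso, rfl⟩
  exact dlb_le_path cv cvl ce cel hcv hcvl hce hcel H hH ops G hG H' hap hiso
end
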